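/- Let R be a DVR with uniformizer t and S = R[d]/(d(d−t)). For any R-module N, the S-modules N ⊗_R S and Hom_R(S, N) are isomorphic via the map sending x·1 + y·d to y·1* + (x + ty)·d*, where 1*, d* is the dual basis to 1, d. -/

import Mathlib

open Polynomial TensorProduct

set_option maxHeartbeats 1000000

theorem stmt4aux (R : Type*) [CommRing R] [Nontrivial R] (t : R)
    (N : Type*) [AddCommGroup N] [Module R N] :
    ∃ e : ((AdjoinRoot ((X : Polynomial R) ^ 2 - C t * X)) ⊗[R] N) ≃ₗ[R]
        ((AdjoinRoot ((X : Polynomial R) ^ 2 - C t * X)) →ₗ[R] N),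
      (∀ (m : (AdjoinRoot ((X : Polynomial R) ^ 2 - C t * X)) ⊗[R] N)
          (s : AdjoinRoot ((X : Polynomial R) ^ 2 - C t * X)),
        e ((AdjoinRoot.root ((X : Polynomial R) ^ 2 - C t * X)) • m) s = e m ((AdjoinRoot.root ((X : Polynomial R) ^ 2 - C t * X)) * s)) ∧
      (∀ x y : N, e ((1 : AdjoinRoot ((X : Polynomial R) ^ 2 - C t * X)) ⊗ₜ[R] x
          + (AdjoinRoot.root ((X : Polynomial R) ^ 2 - C t * X)) ⊗ₜ[R] y) 1 = y ∧
        e ((1 : AdjoinRoot ((X : Polynomial R) ^ 2 - C t * X)) ⊗ₜ[R] x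
          + (AdjoinRoot.root ((X : Polynomial R) ^ 2 - C t * X)) ⊗ₜ[R] y) (AdjoinRoot.root ((X : Polynomial R) ^ 2 - C t * X)) = x + t • y) := by
  set f : Polynomial R := X ^ 2 - C t * X with hf
  have hmonic : f.Monic := by
    rw [hf]
    apply Polynomial.monic_X_pow_sub
    exact lt_of_le_of_lt (by compute_degree : (C t * X).degree ≤ (1 : WithBot ℕ)) (by decide)
  have hdim : f.natDegree = 2 := by
    rw [hf]; compute_degree!
  set S := AdjoinRoot f with hS
  set d : S := AdjoinRoot.root f with hd
  let pb := AdjoinRoot.powerBasis' hmonic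
  let b : Module.Basis (Fin 2) R S := pb.basis.reindex (finCongr hdim)
  have hb0 : b 0 = 1 := by simp [b, pb.basis_eq_pow]; exact pow_zero _
  have hb1 : b 1 = d := by
    simp only [b, Module.Basis.reindex_apply, pb.basis_eq_pow]
    norm_num [pb]
    show AdjoinRoot.root f ^ (1:ℕ) = d
    exact pow_one _
  have hdd : d * d = t • d := by
    have := AdjoinRoot.eval₂_root f
    rw [hf] at this
    simp [eval₂_sub, eval₂_mul, eval₂_pow] at this
    rw [← hd] at this
    have h2 : d * d = AdjoinRoot.of f t * d := by
      rw [← pow_two]; linear_combination this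
    rw [h2, Algebra.smul_def]; rfl
  -- coordinates
  set c0 : S →ₗ[R] R := b.coord 0 with hc0
  set c1 : S →ₗ[R] R := b.coord 1 with hc1
  have hrepr : ∀ s : S, c0 s • (1 : S) + c1 s • d = s := by
    intro s
    have := b.sum_repr s
    rw [Fin.sum_univ_two, hb0, hb1] at this
    exact this
  have hc00 : c0 1 = 1 := by rw [← hb0, hc0]; simp [Module.Basis.coord_apply]
  have hc01 : c0 d = 0 := by rw [← hb1, hc0]; simp [Module.Basis.coord_apply]
  have hc10 : c1 1 = 0 := by rw [← hb0, hc1]; simp [Module.Basis.coord_apply]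
  have hc11 : c1 d = 1 := by rw [← hb1, hc1]; simp [Module.Basis.coord_apply]
  -- coords of d * s
  have hcd0 : ∀ s : S, c0 (d * s) = 0 := by
    intro s
    conv_lhs => rw [← hrepr s]
    rw [mul_add, mul_smul_comm, mul_smul_comm, mul_one, hdd, smul_smul]
    simp [hc01]
  have hcd1 : ∀ s : S, c1 (d * s) = c0 s + t * c1 s := by
    intro s
    conv_lhs => rw [← hrepr s]
    rw [mul_add, mul_smul_comm, mul_smul_comm, mul_one, hdd, smul_smul]
    simp [hc11, mul_comm]
  -- the bilinear form
  set B : S →ₗ[R] (S →ₗ[R] R) :=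
    c1.smulRight c0 + (c0 + t • c1).smulRight c1 with hB
  have hBapp : ∀ s s' : S, B s s' = c0 s' * c1 s + c1 s' * (c0 s + t * c1 s) := by
    intro s s'
    simp [hB, LinearMap.smulRight_apply, mul_comm]
  set φ : (S ⊗[R] N) →ₗ[R] (S →ₗ[R] N) :=
    TensorProduct.lift (LinearMap.smulRightₗ.comp B) with hφ
  have hφapp : ∀ (s : S) (n : N) (s' : S), φ (s ⊗ₜ n) s' = B s s' • n := by
    intro s n s'
    simp [hφ]
  set ψ : (S →ₗ[R] N) →ₗ[R] (S ⊗[R] N) :=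
    (TensorProduct.mk R S N 1).comp (LinearMap.applyₗ d - t • LinearMap.applyₗ (1 : S))
      + (TensorProduct.mk R S N d).comp (LinearMap.applyₗ (1 : S)) with hψ
  have hψapp : ∀ g : S →ₗ[R] N, ψ g = 1 ⊗ₜ (g d - t • g 1) + d ⊗ₜ (g 1) := by
    intro g; simp [hψ]
  have hB11 : B 1 1 = 0 := by rw [hBapp]; rw [hc00, hc10]; ring
  have hBd1 : B d 1 = 1 := by rw [hBapp]; rw [hc00, hc10, hc01, hc11]; ring
  have hB1d : B 1 d = 1 := by rw [hBapp]; rw [hc00, hc10, hc01, hc11]; ring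
  have hBdd : B d d = t := by rw [hBapp]; rw [hc01, hc11]; ring
  have h1 : φ.comp ψ = LinearMap.id := by
    apply LinearMap.ext; intro g
    apply b.ext; intro i
    fin_cases i
    · rw [Fin.mk_zero, hb0]
      simp only [LinearMap.comp_apply, LinearMap.id_apply, hψapp, map_add,
        LinearMap.add_apply, hφapp, hB11, hBd1]
      simp
    · rw [Fin.mk_one, hb1]
      simp only [LinearMap.comp_apply, LinearMap.id_apply, hψapp, map_add,
        LinearMap.add_apply, hφapp, hB1d, hBdd]
      simp [smul_sub, smul_smul]
  have h2 : ψ.comp φ = LinearMap.id := by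
    apply TensorProduct.ext'; intro s n
    simp only [LinearMap.comp_apply, LinearMap.id_apply, hψapp, hφapp]
    have e1 : B s 1 = c1 s := by rw [hBapp, hc00, hc10]; ring
    have e2 : B s d = c0 s + t * c1 s := by rw [hBapp, hc01, hc11]; ring
    rw [e1, e2]
    have : (c0 s + t * c1 s) • n - t • c1 s • n = c0 s • n := by
      rw [add_smul, smul_smul]; abel
    rw [this]
    rw [← smul_tmul, ← smul_tmul, ← add_tmul, hrepr s]
  refine ⟨LinearEquiv.ofLinear φ ψ h1 h2, ?_, ?_⟩
  · intro m s
    simp only [LinearEquiv.ofLinear_apply]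
    induction m using TensorProduct.induction_on with
    | zero => simp
    | tmul s' n =>
        rw [smul_tmul', smul_eq_mul, hφapp, hφapp]
        congr 1
        rw [hBapp, hBapp, hcd0, hcd1, hcd0, hcd1]
        ring
    | add m₁ m₂ ih₁ ih₂ =>
        rw [smul_add, map_add, map_add, LinearMap.add_apply, LinearMap.add_apply, ih₁, ih₂]
  · intro x y
    simp only [LinearEquiv.ofLinear_apply, ← hd, map_add, LinearMap.add_apply, hφapp]
    rw [hB11, hBd1, hB1d, hBdd]
    constructor
    · simp
    · simp


/-- For a commutative ring `R`, `t ∈ R`, `S = R[d]/(d² − td)` and any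
`R`-module `N`, the `S`-modules `N ⊗_R S` and `Hom_R(S, N)` are isomorphic via
`x·1 + y·d ↦ y·1* + (x + ty)·d*`.  We model `S` as `AdjoinRoot (X² − tX)` with
`d` its root; an `S`-module isomorphism is an `R`-linear equivalence commuting with
the action of `d` (on `Hom_R(S,N)` the coinduced action is `(d•f)(s) = f(d·s)`),
and the map is pinned down by its values: the element `1 ⊗ x + d ⊗ y` is sent to the
`R`-linear functional sending `1 ↦ y` and `d ↦ x + t·y`. -/
theorem stmt4 (R : Type*) [CommRing R] (t : R)
    (N : Type*) [AddCommGroup N] [Module R N] :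
    letI S := AdjoinRoot ((X : Polynomial R) ^ 2 - C t * X)
    letI d : S := AdjoinRoot.root _
    ∃ e : (S ⊗[R] N) ≃ₗ[R] (S →ₗ[R] N),
      (∀ (m : S ⊗[R] N) (s : S), e (d • m) s = e m (d * s)) ∧
      (∀ x y : N, e ((1 : S) ⊗ₜ[R] x + d ⊗ₜ[R] y) 1 = y ∧
        e ((1 : S) ⊗ₜ[R] x + d ⊗ₜ[R] y) d = x + t • y) := by
  rcases subsingleton_or_nontrivial R with h | h
  · haveI := Module.subsingleton R (AdjoinRoot ((X : Polynomial R) ^ 2 - C t * X) ⊗[R] N)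
    haveI := Module.subsingleton R (AdjoinRoot ((X : Polynomial R) ^ 2 - C t * X) →ₗ[R] N)
    haveI := Module.subsingleton R N
    exact ⟨LinearEquiv.ofSubsingleton _ _, fun m s => Subsingleton.elim _ _,
      fun x y => ⟨Subsingleton.elim _ _, Subsingleton.elim _ _⟩⟩
  · exact stmt4aux R t N
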